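/- arXiv:2506.23087 — 3 statements merged into one kernel-verified Lean document; each statement's English description precedes it below -/
import Mathlib

section
/- If B is a reflexive Banach space, M : B → ℝ^N is a continuous linear map, F : ℝ^N → (-∞, +∞] is a proper, convex, coercive, lower semicontinuous functional, and b > 0, then the functional 𝓕(u) = F(M u) + b‖u‖_B attains its infimum on B, i.e. there exists u₀ ∈ B with 𝓕(u₀) = inf_{u ∈ B} 𝓕(u). -/
open Filter Topology Metric NormedSpace Set

/-- A lower semicontinuous `EReal`-valued function attains its minimum on a nonempty
compact set (in a Hausdorff space). -/
lemma LowerSemicontinuous.exists_min_on_compact {α : Type*} [TopologicalSpace α] [T2Space α]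
    {f : α → EReal} (hf : LowerSemicontinuous f) {s : Set α} (hs : IsCompact s)
    (hne : s.Nonempty) : ∃ x ∈ s, ∀ y ∈ s, f x ≤ f y := by
  set m := sInf (f '' s) with hm
  by_cases hex : ∃ x ∈ s, f x ≤ m
  · obtain ⟨x, hxs, hx⟩ := hex
    exact ⟨x, hxs, fun y hy => hx.trans (sInf_le (Set.mem_image_of_mem f hy))⟩
  push_neg at hex
  exfalso
  obtain ⟨x₀, hx₀⟩ := hne
  have hmtop : m ≠ ⊤ := (lt_of_lt_of_le (hex x₀ hx₀) le_top).ne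
  have : Nonempty ↥(Set.Ioi m) := ⟨⟨⊤, lt_top_iff_ne_top.2 hmtop⟩⟩
  set Z : ↥(Set.Ioi m) → Set α := fun c => s ∩ f ⁻¹' Set.Iic (c : EReal) with hZ
  have hdir : Directed (· ⊇ ·) Z := by
    intro c d
    refine ⟨⟨min (c : EReal) d, Set.mem_Ioi.2 (lt_min c.2 d.2)⟩, ?_, ?_⟩
    · exact Set.inter_subset_inter_right _ (Set.preimage_mono (Set.Iic_subset_Iic.2
        (min_le_left _ _)))
    · exact Set.inter_subset_inter_right _ (Set.preimage_mono (Set.Iic_subset_Iic.2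
        (min_le_right _ _)))
  have hnon : ∀ c, (Z c).Nonempty := by
    rintro ⟨c, hc⟩
    have : sInf (f '' s) < c := hc
    obtain ⟨v, hv, hvc⟩ := sInf_lt_iff.1 this
    obtain ⟨x, hxs, rfl⟩ := hv
    exact ⟨x, hxs, le_of_lt hvc⟩
  have hcl : ∀ c, IsClosed (Z c) := fun c =>
    (hs.isClosed).inter (hf.isClosed_preimage _)
  have hcomp : ∀ c, IsCompact (Z c) := fun c => hs.inter_right (hf.isClosed_preimage _)
  obtain ⟨x, hx⟩ := IsCompact.nonempty_iInter_of_directed_nonempty_isCompact_isClosed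
    Z hdir hnon hcomp hcl
  have hxs : x ∈ s := by
    have := Set.mem_iInter.1 hx ⟨⊤, lt_top_iff_ne_top.2 hmtop⟩
    exact this.1
  have hxm : f x ≤ m := by
    refine le_of_forall_gt_imp_ge_of_dense fun c hc => ?_
    exact (Set.mem_iInter.1 hx ⟨c, hc⟩).2
  exact absurd hxm (not_le.2 (hex x hxs))

/-- The norm is lower semicontinuous on the weak-star dual. -/
lemma lowerSemicontinuous_weakDual_norm (E : Type*) [NormedAddCommGroup E] [NormedSpace ℝ E] :
    LowerSemicontinuous (fun φ : WeakDual ℝ E => ‖WeakDual.toStrongDual φ‖) := by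
  rw [lowerSemicontinuous_iff_isClosed_preimage]
  intro y
  have : (fun φ : WeakDual ℝ E => ‖WeakDual.toStrongDual φ‖) ⁻¹' Set.Iic y
      = WeakDual.toStrongDual ⁻¹' closedBall 0 y := by
    ext φ
    simp [mem_closedBall_zero_iff]
  rw [this]
  exact WeakDual.isClosed_closedBall 0 y

/-- If `B` is a reflexive Banach space, `M : B → ℝ^N` a continuous linear map,
`F : ℝ^N → (-∞, +∞]` a proper, convex, coercive, lower semicontinuous functional and `b > 0`,
then the functional `𝓕 u = F (M u) + b‖u‖` attains its infimum on `B`. -/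
theorem exists_minimizer_tikhonov
    (B : Type*) [NormedAddCommGroup B] [NormedSpace ℝ B] [CompleteSpace B]
    (hrefl : Function.Surjective (NormedSpace.inclusionInDoubleDual ℝ B))
    (N : ℕ) (M : B →L[ℝ] (EuclideanSpace ℝ (Fin N)))
    (F : EuclideanSpace ℝ (Fin N) → EReal)
    (hF_ne_bot : ∀ x, F x ≠ ⊥)
    (hF_proper : ∃ x, F x ≠ ⊤)
    (hF_convex : ∀ x y : EuclideanSpace ℝ (Fin N), ∀ a c : ℝ, 0 ≤ a → 0 ≤ c → a + c = 1 →
      F (a • x + c • y) ≤ (a : EReal) * F x + (c : EReal) * F y)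
    (hF_coercive : ∀ C : ℝ, ∃ R : ℝ, ∀ x, R ≤ ‖x‖ → (C : EReal) ≤ F x)
    (hF_lsc : LowerSemicontinuous F)
    (b : ℝ) (hb : 0 < b) :
    ∃ u₀ : B, ∀ u : B,
      F (M u₀) + ((b * ‖u₀‖ : ℝ) : EReal) ≤ F (M u) + ((b * ‖u‖ : ℝ) : EReal) := by
  classical
  -- trivial case: F ∘ M identically ⊤
  by_cases hex : ∃ u : B, F (M u) ≠ ⊤
  swap
  · push_neg at hex
    refine ⟨0, fun u => ?_⟩
    rw [hex 0, hex u, EReal.top_add_coe, EReal.top_add_coe]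
  obtain ⟨u₁, hu₁⟩ := hex
  -- the isometric identification of B with its double dual
  have hsurj : Function.Surjective ⇑(NormedSpace.inclusionInDoubleDualLi ℝ (E := B)) := hrefl
  set e : B ≃ₗᵢ[ℝ] StrongDual ℝ (StrongDual ℝ B) :=
    LinearIsometryEquiv.ofSurjective (NormedSpace.inclusionInDoubleDualLi ℝ (E := B)) hsurj with he
  have he_apply : ∀ (u : B) (f : StrongDual ℝ B), e u f = f u := by
    intro u f
    rw [he]
    simp only [LinearIsometryEquiv.coe_ofSurjective]
    rfl
  set X := WeakDual ℝ (StrongDual ℝ B) with hX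
  set d : X → StrongDual ℝ (StrongDual ℝ B) := fun φ => WeakDual.toStrongDual φ with hd
  set j : X → B := fun φ => e.symm (d φ) with hj
  -- the map T φ = M (j φ) is weak-star continuous
  have hT : Continuous (fun φ : X => M (j φ)) := by
    have hfun : (fun φ : X => M (j φ))
        = fun φ => (WithLp.equiv 2 (Fin N → ℝ)).symm
            (fun i => φ ((EuclideanSpace.proj i).comp M)) := by
      funext φ
      ext i
      have : ((EuclideanSpace.proj i).comp M) (j φ) = e (j φ) ((EuclideanSpace.proj i).comp M) :=
        (he_apply _ _).symm
      have h2 : e (j φ) = d φ := e.apply_symm_apply _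
      calc (M (j φ)) i = ((EuclideanSpace.proj i).comp M) (j φ) := rfl
        _ = e (j φ) ((EuclideanSpace.proj i).comp M) := this
        _ = d φ ((EuclideanSpace.proj i).comp M) := by rw [h2]
        _ = φ ((EuclideanSpace.proj i).comp M) := rfl
    rw [hfun]
    exact (PiLp.continuous_toLp 2 (fun _ : Fin N => ℝ)).comp
      (continuous_pi fun i => WeakDual.eval_continuous _)
  -- the functional on the weak-star double dual
  set Φ : X → EReal := fun φ => F (M (j φ)) + ((b * ‖d φ‖ : ℝ) : EReal) with hΦdef
  have hΦ_lsc : LowerSemicontinuous Φ := by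
    have h1 : LowerSemicontinuous (fun φ : X => F (M (j φ))) := hF_lsc.comp hT
    have h2 : LowerSemicontinuous (fun φ : X => ((b * ‖d φ‖ : ℝ) : EReal)) := by
      have hg : Continuous (fun r : ℝ => ((b * r : ℝ) : EReal)) :=
        continuous_coe_real_ereal.comp (continuous_const.mul continuous_id)
      have hmono : Monotone (fun r : ℝ => ((b * r : ℝ) : EReal)) := fun r s hrs =>
        EReal.coe_le_coe_iff.2 (mul_le_mul_of_nonneg_left hrs hb.le)
      exact hg.comp_lowerSemicontinuous (lowerSemicontinuous_weakDual_norm (StrongDual ℝ B)) hmono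
    exact h1.add' h2 fun φ =>
      EReal.continuousAt_add (Or.inr (EReal.coe_ne_bot _)) (Or.inr (EReal.coe_ne_top _))
  -- a real lower bound for F
  obtain ⟨R₁, hR₁⟩ := hF_coercive 0
  set R₁' := max R₁ 0 with hR₁'
  obtain ⟨x₀, hx₀mem, hx₀min⟩ := hF_lsc.exists_min_on_compact
    (isCompact_closedBall (0 : EuclideanSpace ℝ (Fin N)) R₁')
    ⟨0, mem_closedBall_self (le_max_right _ _)⟩
  set mE : EReal := min (F x₀) 0 with hmE
  have hmE_bot : mE ≠ ⊥ := by
    simp only [hmE, ne_eq, min_eq_bot]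
    push_neg
    exact ⟨hF_ne_bot _, by simp⟩
  have hmE_top : mE ≠ ⊤ := (lt_of_le_of_lt (min_le_right _ _) (by norm_num)).ne
  set m : ℝ := mE.toReal with hmdef
  have hmE_eq : (m : EReal) = mE := EReal.coe_toReal hmE_top hmE_bot
  have hmF : ∀ x, (m : EReal) ≤ F x := by
    intro x
    rw [hmE_eq]
    by_cases hx : ‖x‖ ≤ R₁'
    · exact (min_le_left _ _).trans (hx₀min x (mem_closedBall_zero_iff.2 hx))
    · push_neg at hx
      exact (min_le_right _ _).trans (hR₁ x ((le_max_left _ _).trans hx.le))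
  have hlow : ∀ u : B, ((m + b * ‖u‖ : ℝ) : EReal) ≤ F (M u) + ((b * ‖u‖ : ℝ) : EReal) := by
    intro u
    rw [EReal.coe_add]
    exact add_le_add_left (hmF _) _
  -- the value at u₁ is a real number C
  set c₁ : ℝ := (F (M u₁)).toReal with hc₁
  have hc₁eq : ((c₁ : ℝ) : EReal) = F (M u₁) := EReal.coe_toReal hu₁ (hF_ne_bot _)
  set C : ℝ := c₁ + b * ‖u₁‖ with hC
  set R : ℝ := max ‖u₁‖ ((C - m) / b) with hR
  -- the weak-star compact ball
  set K : Set X := WeakDual.toStrongDual ⁻¹' closedBall (0 : StrongDual ℝ (StrongDual ℝ B)) R with hK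
  have hKcomp : IsCompact K := by rw [hK]; exact WeakDual.isCompact_closedBall 0 R
  have hmemK : ∀ u : B, ‖u‖ ≤ R → (StrongDual.toWeakDual (e u) : X) ∈ K := by
    intro u hu
    simp only [hK, Set.mem_preimage, mem_closedBall_zero_iff]
    have : WeakDual.toStrongDual (StrongDual.toWeakDual (e u)) = e u :=
      StrongDual.toWeakDual.symm_apply_apply _
    rw [this]
    exact (dist_zero_right (e u)).trans_le ((e.norm_map u).trans_le hu)
  have hΦval : ∀ u : B, Φ (StrongDual.toWeakDual (e u))
      = F (M u) + ((b * ‖u‖ : ℝ) : EReal) := by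
    intro u
    have h1 : d (StrongDual.toWeakDual (e u)) = e u :=
      StrongDual.toWeakDual.symm_apply_apply _
    have h2 : j (StrongDual.toWeakDual (e u)) = u := by
      rw [hj]; simp only [h1]; exact e.symm_apply_apply u
    simp only [hΦdef, h1, h2, e.norm_map]
  obtain ⟨φ₀, hφ₀K, hφ₀min⟩ := hΦ_lsc.exists_min_on_compact hKcomp
    ⟨_, hmemK u₁ (le_max_left _ _)⟩
  set u₀ : B := j φ₀ with hu₀
  have hnu₀ : ‖u₀‖ = ‖d φ₀‖ := e.symm.norm_map _
  have hΦ₀ : Φ φ₀ = F (M u₀) + ((b * ‖u₀‖ : ℝ) : EReal) := by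
    simp only [hΦdef, hu₀]
    rw [← hnu₀]
  have hΦ₀leC : F (M u₀) + ((b * ‖u₀‖ : ℝ) : EReal) ≤ ((C : ℝ) : EReal) := by
    rw [← hΦ₀]
    have := hφ₀min _ (hmemK u₁ (le_max_left _ _))
    rw [hΦval u₁, ← hc₁eq, ← EReal.coe_add] at this
    exact this.trans_eq (by rw [hC])
  refine ⟨u₀, fun u => ?_⟩
  by_cases hu : ‖u‖ ≤ R
  · have := hφ₀min _ (hmemK u hu)
    rw [hΦval u] at this
    rw [← hΦ₀]
    exact this
  · push_neg at hu
    refine hΦ₀leC.trans (le_trans ?_ (hlow u))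
    rw [EReal.coe_le_coe_iff]
    have h1 : (C - m) / b ≤ R := le_max_right _ _
    have h2 : (C - m) / b < ‖u‖ := h1.trans_lt hu
    rw [div_lt_iff₀ hb] at h2
    nlinarith [hu, hb]
end

section
/- Let B be a reflexive Banach space, {v_j}_{j∈ℕ} ⊂ B* linearly independent with dense linear span and ‖v_j‖ ≤ 1, M_N u = (⟨v_1,u⟩,…,⟨v_N,u⟩), h⁰ ∈ ℓ^∞, F_N(g) = ‖g − Π_N h⁰‖_{ℓ^∞(ℝ^N)}, and b_N > 0 with b_N → 0. Suppose for each N a minimizer u_N of 𝓕_N(u) = F_N(M_N u) + b_N‖u‖_B exists. If the equation ⟨v_j, u⟩ = h⁰_j for all j ∈ ℕ admits a solution u_∞ ∈ B, then 𝓕_N(u_N) ≤ ‖u_∞‖_B · b_N for all N, and the sequence {u_N} converges weakly in B to u_∞. -/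
open Filter Topology

/-- Convergence of Tikhonov minimizers. Let `B` be a reflexive Banach space, `{v j} ⊆ B*`
linearly independent with dense span and `‖v j‖ ≤ 1`, `h⁰ ∈ ℓ^∞`, `b N > 0` with `b N → 0`,
and `𝓕 N u = ‖M_N u - Π_N h⁰‖_∞ + b N ‖u‖` with `M_N u = (⟨v j, u⟩)_{j<N}`. If `u_N` is a
minimizer of `𝓕 N` for each `N` and the equation `⟨v j, u⟩ = h⁰ j` (all `j`) has a solution
`u_∞ ∈ B`, then `𝓕 N (u_N) ≤ ‖u_∞‖ * b N` for all `N` and `u_N ⇀ u_∞` weakly in `B`. -/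
theorem tikhonov_minimizers_weak_convergence
    (B : Type*) [NormedAddCommGroup B] [NormedSpace ℝ B] [CompleteSpace B]
    (hrefl : Function.Surjective (NormedSpace.inclusionInDoubleDual ℝ B))
    (v : ℕ → StrongDual ℝ B)
    (hv_indep : LinearIndependent ℝ v)
    (hv_dense : Dense (Submodule.span ℝ (Set.range v) : Set (StrongDual ℝ B)))
    (hv_bound : ∀ j, ‖v j‖ ≤ 1)
    (h0 : ℕ → ℝ) (hh0 : ∃ C : ℝ, ∀ j, |h0 j| ≤ C)
    (b : ℕ → ℝ) (hb_pos : ∀ N, 0 < b N) (hb_lim : Tendsto b atTop (𝓝 0))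
    (𝓕 : ℕ → B → ℝ)
    (h𝓕 : ∀ N u, 𝓕 N u = (⨆ j : Fin N, |v j u - h0 j|) + b N * ‖u‖)
    (uN : ℕ → B)
    (huN_min : ∀ N, ∀ u : B, 𝓕 N (uN N) ≤ 𝓕 N u)
    (uinf : B) (huinf : ∀ j, v j uinf = h0 j) :
    (∀ N, 𝓕 N (uN N) ≤ ‖uinf‖ * b N) ∧
    (∀ f : StrongDual ℝ B, Tendsto (fun N => f (uN N)) atTop (𝓝 (f uinf))) := by

  -- Part 1
  have part1 : ∀ N, 𝓕 N (uN N) ≤ ‖uinf‖ * b N := by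
    intro N
    have hle := huN_min N uinf
    have hsup : (⨆ j : Fin N, |v j uinf - h0 j|) = 0 := by
      apply le_antisymm
      · exact Real.iSup_le (fun j => by simp [huinf j]) le_rfl
      · exact Real.iSup_nonneg (fun j => abs_nonneg _)
    rw [h𝓕 N uinf, hsup, zero_add] at hle
    calc 𝓕 N (uN N) ≤ b N * ‖uinf‖ := hle
      _ = ‖uinf‖ * b N := mul_comm _ _
  refine ⟨part1, ?_⟩
  -- norm bound
  have hsup_nonneg : ∀ N, 0 ≤ ⨆ j : Fin N, |v j (uN N) - h0 j| :=
    fun N => Real.iSup_nonneg (fun j => abs_nonneg _)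
  have hnorm : ∀ N, ‖uN N‖ ≤ ‖uinf‖ := by
    intro N
    have h1 : b N * ‖uN N‖ ≤ ‖uinf‖ * b N := by
      have := part1 N
      rw [h𝓕 N (uN N)] at this
      linarith [hsup_nonneg N]
    have hbN := hb_pos N
    nlinarith
  -- key componentwise bound
  have hcomp : ∀ j N, j < N → |v j (uN N) - h0 j| ≤ ‖uinf‖ * b N := by
    intro j N hjN
    have h1 : |v j (uN N) - h0 j| ≤ ⨆ i : Fin N, |v i (uN N) - h0 i| := by
      have := le_ciSup (Set.Finite.bddAbove (Set.finite_range
        (fun i : Fin N => |v i (uN N) - h0 i|))) (⟨j, hjN⟩ : Fin N)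
      simpa using this
    have h2 : (⨆ i : Fin N, |v i (uN N) - h0 i|) ≤ ‖uinf‖ * b N := by
      have := part1 N
      rw [h𝓕 N (uN N)] at this
      nlinarith [mul_nonneg (le_of_lt (hb_pos N)) (norm_nonneg (uN N))]
    linarith
  -- convergence for each v j
  have hvlim : ∀ j : ℕ, Tendsto (fun N => v j (uN N)) atTop (𝓝 (v j uinf)) := by
    intro j
    rw [huinf j]
    have h0lim : Tendsto (fun N => v j (uN N) - h0 j) atTop (𝓝 0) := by
      refine squeeze_zero_norm' (a := fun N => ‖uinf‖ * b N) ?_ ?_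
      · filter_upwards [eventually_gt_atTop j] with N hN
        simpa using hcomp j N hN
      · simpa using hb_lim.const_mul ‖uinf‖
    have := h0lim.add_const (h0 j)
    simpa using this
  -- convergence for elements of the span
  have hspan : ∀ g ∈ Submodule.span ℝ (Set.range v),
      Tendsto (fun N => g (uN N)) atTop (𝓝 (g uinf)) := by
    intro g hg
    induction hg using Submodule.span_induction with
    | mem x hx =>
      obtain ⟨j, rfl⟩ := hx
      exact hvlim j
    | zero => simp only [ContinuousLinearMap.zero_apply]; exact tendsto_const_nhds
    | add x y hx hy ihx ihy => simp only [ContinuousLinearMap.add_apply]; exact ihx.add ihy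
    | smul c x hx ihx => simpa using ihx.const_mul c
  -- general f via density
  intro f
  rw [Metric.tendsto_atTop]
  intro ε hε
  set C := ‖uinf‖ with hC
  have hC0 : 0 ≤ C := norm_nonneg _
  have hδ : (0:ℝ) < ε / (4 * (C + 1)) := by positivity
  obtain ⟨g, hg_mem, hg_close⟩ := Metric.mem_closure_iff.mp (hv_dense f) _ hδ
  have hg_mem' : g ∈ Submodule.span ℝ (Set.range v) := hg_mem
  have hglim := hspan g hg_mem'
  rw [Metric.tendsto_atTop] at hglim
  obtain ⟨N₀, hN₀⟩ := hglim (ε / 2) (by positivity)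
  refine ⟨N₀, fun N hN => ?_⟩
  have hfg : ‖f - g‖ < ε / (4 * (C + 1)) := by
    simpa [dist_eq_norm] using hg_close
  have key : ∀ x : B, ‖x‖ ≤ C → |f x - g x| < ε / 4 := by
    intro x hx
    have h1 : |f x - g x| ≤ ‖f - g‖ * ‖x‖ := by
      have := (f - g).le_opNorm x
      simpa using this
    have h2 : ‖f - g‖ * ‖x‖ ≤ ‖f - g‖ * C := by
      exact mul_le_mul_of_nonneg_left hx (norm_nonneg _)
    have h3 : ‖f - g‖ * C < ε / (4 * (C + 1)) * (C + 1) := by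
      have : ‖f - g‖ * C ≤ ‖f - g‖ * (C + 1) :=
        mul_le_mul_of_nonneg_left (by linarith) (norm_nonneg _)
      have h4 : ‖f - g‖ * (C + 1) < ε / (4 * (C + 1)) * (C + 1) :=
        mul_lt_mul_of_pos_right hfg (by linarith)
      linarith
    have h5 : ε / (4 * (C + 1)) * (C + 1) = ε / 4 := by
      field_simp
    linarith
  have hgN := hN₀ N hN
  rw [Real.dist_eq] at hgN ⊢
  have e1 := key (uN N) (hnorm N)
  have e2 := key uinf le_rfl
  have : |f (uN N) - f uinf| ≤ |f (uN N) - g (uN N)| + |g (uN N) - g uinf|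
      + |g uinf - f uinf| := by
    have := abs_sub_abs_le_abs_sub (f (uN N)) (f uinf)
    calc |f (uN N) - f uinf|
        = |(f (uN N) - g (uN N)) + (g (uN N) - g uinf) + (g uinf - f uinf)| := by ring_nf
      _ ≤ _ := by
          exact (abs_add_le _ _).trans (by gcongr <;> exact abs_add_le _ _)
  have e2' : |g uinf - f uinf| < ε / 4 := by rw [abs_sub_comm]; exact e2
  linarith
end

section
/- Conversely, in the setting above, if there is a constant C₀ > 0 such that 𝓕_N(u_N) ≤ C₀ b_N for all N, then the equation ⟨v_j, u⟩ = h⁰_j for all j ∈ ℕ is solvable in B. -/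
open Filter Topology

/-- Converse direction. In the same Tikhonov setting (`B` reflexive, `{v j}` linearly
independent with dense span, `‖v j‖ ≤ 1`, `h⁰ ∈ ℓ^∞`, `b N > 0`, `b N → 0`, `u_N` minimizers
of `𝓕 N u = ‖M_N u - Π_N h⁰‖_∞ + b N ‖u‖`): if there is `C₀ > 0` with
`𝓕 N (u_N) ≤ C₀ * b N` for all `N`, then the equation `⟨v j, u⟩ = h⁰ j` (for all `j ∈ ℕ`) is
solvable in `B`. -/
theorem tikhonov_bound_implies_solvable
    (B : Type*) [NormedAddCommGroup B] [NormedSpace ℝ B] [CompleteSpace B]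
    (hrefl : Function.Surjective (NormedSpace.inclusionInDoubleDual ℝ B))
    (v : ℕ → StrongDual ℝ B)
    (hv_indep : LinearIndependent ℝ v)
    (hv_dense : Dense (Submodule.span ℝ (Set.range v) : Set (StrongDual ℝ B)))
    (hv_bound : ∀ j, ‖v j‖ ≤ 1)
    (h0 : ℕ → ℝ) (hh0 : ∃ C : ℝ, ∀ j, |h0 j| ≤ C)
    (b : ℕ → ℝ) (hb_pos : ∀ N, 0 < b N) (hb_lim : Tendsto b atTop (𝓝 0))
    (𝓕 : ℕ → B → ℝ)
    (h𝓕 : ∀ N u, 𝓕 N u = (⨆ j : Fin N, |v j u - h0 j|) + b N * ‖u‖)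
    (uN : ℕ → B)
    (huN_min : ∀ N, ∀ u : B, 𝓕 N (uN N) ≤ 𝓕 N u)
    (C₀ : ℝ) (hC₀ : 0 < C₀)
    (hbound : ∀ N, 𝓕 N (uN N) ≤ C₀ * b N) :
    ∃ u : B, ∀ j, v j u = h0 j := by
  set J := NormedSpace.inclusionInDoubleDual ℝ B with hJ
  have hsup_nonneg : ∀ N, 0 ≤ ⨆ j : Fin N, |v j (uN N) - h0 j| :=
    fun N => Real.iSup_nonneg (fun j => abs_nonneg _)
  have hnorm : ∀ N, ‖uN N‖ ≤ C₀ := by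
    intro N
    have h := hbound N
    rw [h𝓕] at h
    have h1 : b N * ‖uN N‖ ≤ C₀ * b N := by nlinarith [hsup_nonneg N]
    nlinarith [hb_pos N]
  have hsup_le : ∀ N, (⨆ j : Fin N, |v j (uN N) - h0 j|) ≤ C₀ * b N := by
    intro N
    have h := hbound N
    rw [h𝓕] at h
    nlinarith [hb_pos N, norm_nonneg (uN N)]
  have htend : ∀ j, Tendsto (fun N => v j (uN N)) atTop (𝓝 (h0 j)) := by
    intro j
    rw [tendsto_iff_dist_tendsto_zero]
    have hbnd : Tendsto (fun N => C₀ * b N) atTop (𝓝 0) := by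
      simpa using hb_lim.const_mul C₀
    refine squeeze_zero' (Eventually.of_forall fun N => dist_nonneg) ?_ hbnd
    filter_upwards [eventually_ge_atTop (j + 1)] with N hN
    have hjN : j < N := hN
    calc dist (v j (uN N)) (h0 j) = |v j (uN N) - h0 j| := Real.dist_eq _ _
      _ ≤ ⨆ i : Fin N, |v i (uN N) - h0 i| :=
          le_ciSup (f := fun i : Fin N => |v i (uN N) - h0 i|) (Finite.bddAbove_range _) ⟨j, hjN⟩
      _ ≤ C₀ * b N := hsup_le N
  -- Banach-Alaoglu in the weak-star topology of the double dual
  let φ : ℕ → WeakDual ℝ (StrongDual ℝ B) := fun N => J (uN N)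
  have hKcompact : IsCompact (WeakDual.toStrongDual ⁻¹'
      Metric.closedBall (0 : StrongDual ℝ (StrongDual ℝ B)) C₀) :=
    WeakDual.isCompact_closedBall (0 : StrongDual ℝ (StrongDual ℝ B)) C₀
  have hmem : ∀ N, φ N ∈ WeakDual.toStrongDual ⁻¹'
      Metric.closedBall (0 : StrongDual ℝ (StrongDual ℝ B)) C₀ := by
    intro N
    simp only [Set.mem_preimage, Metric.mem_closedBall, dist_zero_right]
    exact le_trans (le_trans (le_of_eq (dist_zero_right (WeakDual.toStrongDual (φ N)))) (NormedSpace.double_dual_bound ℝ B (uN N))) (hnorm N)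
  have hle : Filter.map φ atTop ≤ 𝓟 (WeakDual.toStrongDual ⁻¹'
      Metric.closedBall (0 : StrongDual ℝ (StrongDual ℝ B)) C₀) := by
    rw [Filter.le_principal_iff, Filter.mem_map]
    exact Eventually.of_forall hmem
  obtain ⟨x, -, hx⟩ := hKcompact.exists_clusterPt hle
  obtain ⟨u, hu⟩ := hrefl (WeakDual.toStrongDual x)
  refine ⟨u, fun j => ?_⟩
  have hcont : ContinuousAt (fun ψ : WeakDual ℝ (StrongDual ℝ B) => ψ (v j)) x :=
    (WeakDual.eval_continuous (v j)).continuousAt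
  have hmap : Tendsto (fun ψ : WeakDual ℝ (StrongDual ℝ B) => ψ (v j))
      (Filter.map φ atTop) (Filter.map (fun N => v j (uN N)) atTop) := by
    rw [Filter.tendsto_map'_iff]
    exact le_of_eq rfl
  have hcluster : ClusterPt (x (v j)) (Filter.map (fun N => v j (uN N)) atTop) :=
    hx.map hcont hmap
  have hx_eq : x (v j) = h0 j := by
    have h2 : ClusterPt (x (v j)) (𝓝 (h0 j)) := hcluster.mono (htend j)
    exact eq_of_nhds_neBot h2
  have : (J u) (v j) = v j u := NormedSpace.dual_def ℝ B u (v j)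
  rw [← this, hu]
  exact hx_eq
end
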